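/- Let G = alternatingGroup (Fin 7 ⊕ Fin 3) (isomorphic to A_10) and let H be the intersection of G with the image of the embedding Equiv.Perm.sumCongrHom : Equiv.Perm (Fin 7) × Equiv.Perm (Fin 3) → Equiv.Perm (Fin 7 ⊕ Fin 3) (so H is the intransitive subgroup (S_7 × S_3) ∩ A_10). Then Γ(G) = Γ(H): a prime divides |G| iff it divides |H|, and for all distinct primes r, s, G has an element of order r·s iff H has an element of order r·s. -/

import Mathlib

set_option maxRecDepth 40000

open Equiv Equiv.Perm

namespace PG10

/-! Auxiliary order-computation lemmas -/

private lemma div_enum {x : ℕ} {n : ℕ} (hn : 0 < n) (hd : x ∣ n) : x ≤ n ∧ 0 < x :=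
  ⟨Nat.le_of_dvd hn hd, Nat.pos_of_dvd_of_pos hd hn⟩

lemma ord6 {M : Type*} [Monoid M] {x : M} (h : x ^ 6 = 1) (h2 : x ^ 2 ≠ 1)
    (h3 : x ^ 3 ≠ 1) : orderOf x = 6 := by
  have hd : orderOf x ∣ 6 := orderOf_dvd_of_pow_eq_one h
  have hne1 : orderOf x ≠ 1 := fun hc => h2 (by rw [orderOf_eq_one_iff.mp hc, one_pow])
  have hne2 : orderOf x ≠ 2 := fun hc => h2 (hc ▸ pow_orderOf_eq_one x)
  have hne3 : orderOf x ≠ 3 := fun hc => h3 (hc ▸ pow_orderOf_eq_one x)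
  obtain ⟨hle, hpos⟩ := div_enum (by norm_num) hd
  interval_cases h' : orderOf x <;> omega

lemma ord10 {M : Type*} [Monoid M] {x : M} (h : x ^ 10 = 1) (h2 : x ^ 2 ≠ 1)
    (h5 : x ^ 5 ≠ 1) : orderOf x = 10 := by
  have hd : orderOf x ∣ 10 := orderOf_dvd_of_pow_eq_one h
  have hne1 : orderOf x ≠ 1 := fun hc => h2 (by rw [orderOf_eq_one_iff.mp hc, one_pow])
  have hne2 : orderOf x ≠ 2 := fun hc => h2 (hc ▸ pow_orderOf_eq_one x)
  have hne5 : orderOf x ≠ 5 := fun hc => h5 (hc ▸ pow_orderOf_eq_one x)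
  obtain ⟨hle, hpos⟩ := div_enum (by norm_num) hd
  interval_cases h' : orderOf x <;> omega

lemma ord15 {M : Type*} [Monoid M] {x : M} (h : x ^ 15 = 1) (h3 : x ^ 3 ≠ 1)
    (h5 : x ^ 5 ≠ 1) : orderOf x = 15 := by
  have hd : orderOf x ∣ 15 := orderOf_dvd_of_pow_eq_one h
  have hne1 : orderOf x ≠ 1 := fun hc => h3 (by rw [orderOf_eq_one_iff.mp hc, one_pow])
  have hne3 : orderOf x ≠ 3 := fun hc => h3 (hc ▸ pow_orderOf_eq_one x)
  have hne5 : orderOf x ≠ 5 := fun hc => h5 (hc ▸ pow_orderOf_eq_one x)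
  obtain ⟨hle, hpos⟩ := div_enum (by norm_num) hd
  interval_cases h' : orderOf x <;> omega

lemma ord21 {M : Type*} [Monoid M] {x : M} (h : x ^ 21 = 1) (h3 : x ^ 3 ≠ 1)
    (h7 : x ^ 7 ≠ 1) : orderOf x = 21 := by
  have hd : orderOf x ∣ 21 := orderOf_dvd_of_pow_eq_one h
  have hne1 : orderOf x ≠ 1 := fun hc => h3 (by rw [orderOf_eq_one_iff.mp hc, one_pow])
  have hne3 : orderOf x ≠ 3 := fun hc => h3 (hc ▸ pow_orderOf_eq_one x)
  have hne7 : orderOf x ≠ 7 := fun hc => h7 (hc ▸ pow_orderOf_eq_one x)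
  obtain ⟨hle, hpos⟩ := div_enum (by norm_num) hd
  interval_cases h' : orderOf x <;> omega

/-! A prime dividing the lcm of a multiset of naturals divides one of its members. -/

lemma prime_dvd_of_dvd_lcm {p : ℕ} (hp : p.Prime) :
    ∀ (s : Multiset ℕ), p ∣ s.lcm → ∃ a ∈ s, p ∣ a := by
  intro s
  induction s using Multiset.induction_on with
  | empty =>
    intro h
    rw [Multiset.lcm_zero] at h
    exact absurd (Nat.dvd_one.mp h) hp.ne_one
  | cons a s ih =>
    intro h
    rw [Multiset.lcm_cons] at h
    have h2 : p ∣ a * s.lcm :=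
      h.trans (lcm_dvd (dvd_mul_right _ _) (dvd_mul_left _ _))
    rcases hp.dvd_mul.mp h2 with h3 | h3
    · exact ⟨a, Multiset.mem_cons_self _ _, h3⟩
    · obtain ⟨b, hb, hb'⟩ := ih h3
      exact ⟨b, Multiset.mem_cons_of_mem hb, hb'⟩

/-! The sum of the cycle type of a permutation of 10 points is at most 10. -/

lemma cycleType_sum_le (σ : Perm (Fin 7 ⊕ Fin 3)) : σ.cycleType.sum ≤ 10 := by
  rw [Equiv.Perm.sum_cycleType]
  have := Finset.card_le_univ σ.support
  simpa using this

/-! No even permutation of 10 points has order 14 or 35. -/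

lemma no_order_14 (σ : Perm (Fin 7 ⊕ Fin 3)) (h1 : Perm.sign σ = 1)
    (h : orderOf σ = 14) : False := by
  have hl : σ.cycleType.lcm = 14 := by rw [Equiv.Perm.lcm_cycleType, h]
  have hsum := cycleType_sum_le σ
  obtain ⟨b, hb, hb7⟩ := prime_dvd_of_dvd_lcm (by norm_num : Nat.Prime 7) _
    (hl ▸ (by norm_num : (7:ℕ) ∣ 14))
  obtain ⟨a, ha, ha2⟩ := prime_dvd_of_dvd_lcm (by norm_num : Nat.Prime 2) _
    (hl ▸ (by norm_num : (2:ℕ) ∣ 14))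
  have hble : b ≤ σ.cycleType.sum :=
    Multiset.single_le_sum (fun _ _ => Nat.zero_le _) _ hb
  have hb2 := Equiv.Perm.two_le_of_mem_cycleType hb
  have hbeq : b = 7 := by omega
  subst hbeq
  have hane : a ≠ 7 := by omega
  set s1 := σ.cycleType.erase 7 with hs1
  have hcons : σ.cycleType = 7 ::ₘ s1 := (Multiset.cons_erase hb).symm
  have ha1 : a ∈ s1 := by
    rw [hcons] at ha
    rcases Multiset.mem_cons.mp ha with h' | h'
    · exact absurd h' hane
    · exact h'
  set s2 := s1.erase a with hs2
  have hcons2 : s1 = a ::ₘ s2 := (Multiset.cons_erase ha1).symm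
  have hsum2 : σ.cycleType.sum = 7 + a + s2.sum := by
    rw [hcons, hcons2]; simp [add_assoc]
  have ha2' := Equiv.Perm.two_le_of_mem_cycleType ha
  have haeq : a = 2 := by omega
  subst haeq
  have hs2nil : s2 = 0 := by
    by_contra hne
    obtain ⟨c, hc⟩ := Multiset.exists_mem_of_ne_zero hne
    have hcmem : c ∈ σ.cycleType := by
      rw [hcons, hcons2]
      exact Multiset.mem_cons_of_mem (Multiset.mem_cons_of_mem hc)
    have hc2 := Equiv.Perm.two_le_of_mem_cycleType hcmem
    have hcle : c ≤ s2.sum :=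
      Multiset.single_le_sum (fun _ _ => Nat.zero_le _) _ hc
    omega
  have hct : σ.cycleType = 7 ::ₘ 2 ::ₘ 0 := by rw [hcons, hcons2, hs2nil]
  have hsign := Equiv.Perm.sign_of_cycleType σ
  rw [hct, h1] at hsign
  simp only [Multiset.sum_cons, Multiset.card_cons, Multiset.sum_zero, Multiset.card_zero]
    at hsign
  norm_num at hsign

lemma no_order_35 (σ : Perm (Fin 7 ⊕ Fin 3)) (h : orderOf σ = 35) : False := by
  have hl : σ.cycleType.lcm = 35 := by rw [Equiv.Perm.lcm_cycleType, h]
  have hsum := cycleType_sum_le σ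
  obtain ⟨b, hb, hb7⟩ := prime_dvd_of_dvd_lcm (by norm_num : Nat.Prime 7) _
    (hl ▸ (by norm_num : (7:ℕ) ∣ 35))
  obtain ⟨a, ha, ha5⟩ := prime_dvd_of_dvd_lcm (by norm_num : Nat.Prime 5) _
    (hl ▸ (by norm_num : (5:ℕ) ∣ 35))
  have hble : b ≤ σ.cycleType.sum :=
    Multiset.single_le_sum (fun _ _ => Nat.zero_le _) _ hb
  have hale : a ≤ σ.cycleType.sum :=
    Multiset.single_le_sum (fun _ _ => Nat.zero_le _) _ ha
  have hb2 := Equiv.Perm.two_le_of_mem_cycleType hb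
  have ha2 := Equiv.Perm.two_le_of_mem_cycleType ha
  have hbeq : b = 7 := by omega
  have haeq : a = 5 ∨ a = 10 := by omega
  have hane : a ≠ b := by omega
  have ha1 : a ∈ σ.cycleType.erase b := (Multiset.mem_erase_of_ne hane).mpr ha
  have hsum2 : σ.cycleType.sum = b + (σ.cycleType.erase b).sum := by
    conv_lhs => rw [← Multiset.cons_erase hb]
    simp
  have hale2 : a ≤ (σ.cycleType.erase b).sum :=
    Multiset.single_le_sum (fun _ _ => Nat.zero_le _) _ ha1
  omega

/-! Explicit elements of `(S₇ × S₃) ∩ A₁₀` of orders 6, 10, 15, 21. -/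

def a6 : Perm (Fin 7) := c[0, 1] * c[2, 3]
def a10 : Perm (Fin 7) := c[0, 1, 2, 3, 4] * c[5, 6]
def a15 : Perm (Fin 7) := c[0, 1, 2, 3, 4]
def b2 : Perm (Fin 3) := c[0, 1]

def y6 : Perm (Fin 7 ⊕ Fin 3) := Equiv.sumCongr a6 (finRotate 3)
def y10 : Perm (Fin 7 ⊕ Fin 3) := Equiv.sumCongr a10 b2
def y15 : Perm (Fin 7 ⊕ Fin 3) := Equiv.sumCongr a15 (finRotate 3)
def y21 : Perm (Fin 7 ⊕ Fin 3) := Equiv.sumCongr (finRotate 7) (finRotate 3)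

abbrev Hsub : Subgroup (Perm (Fin 7 ⊕ Fin 3)) :=
  alternatingGroup (Fin 7 ⊕ Fin 3) ⊓ (Equiv.Perm.sumCongrHom (Fin 7) (Fin 3)).range

lemma mem6 : y6 ∈ Hsub :=
  Subgroup.mem_inf.mpr ⟨Equiv.Perm.mem_alternatingGroup.mpr (by decide),
    MonoidHom.mem_range.mpr ⟨(a6, finRotate 3), rfl⟩⟩

lemma mem10 : y10 ∈ Hsub :=
  Subgroup.mem_inf.mpr ⟨Equiv.Perm.mem_alternatingGroup.mpr (by decide),
    MonoidHom.mem_range.mpr ⟨(a10, b2), rfl⟩⟩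

lemma mem15 : y15 ∈ Hsub :=
  Subgroup.mem_inf.mpr ⟨Equiv.Perm.mem_alternatingGroup.mpr (by decide),
    MonoidHom.mem_range.mpr ⟨(a15, finRotate 3), rfl⟩⟩

lemma mem21 : y21 ∈ Hsub :=
  Subgroup.mem_inf.mpr ⟨Equiv.Perm.mem_alternatingGroup.mpr (by decide),
    MonoidHom.mem_range.mpr ⟨(finRotate 7, finRotate 3), rfl⟩⟩

lemma ord_y6 : orderOf y6 = 6 := ord6 (by decide) (by decide) (by decide)
lemma ord_y10 : orderOf y10 = 10 := ord10 (by decide) (by decide) (by decide)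
lemma ord_y15 : orderOf y15 = 15 := ord15 (by decide) (by decide) (by decide)
lemma ord_y21 : orderOf y21 = 21 := ord21 (by decide) (by decide) (by decide)

lemma exH6 : ∃ y : Hsub, orderOf y = 6 :=
  ⟨⟨y6, mem6⟩, by rw [Subgroup.orderOf_mk]; exact ord_y6⟩
lemma exH10 : ∃ y : Hsub, orderOf y = 10 :=
  ⟨⟨y10, mem10⟩, by rw [Subgroup.orderOf_mk]; exact ord_y10⟩
lemma exH15 : ∃ y : Hsub, orderOf y = 15 :=
  ⟨⟨y15, mem15⟩, by rw [Subgroup.orderOf_mk]; exact ord_y15⟩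
lemma exH21 : ∃ y : Hsub, orderOf y = 21 :=
  ⟨⟨y21, mem21⟩, by rw [Subgroup.orderOf_mk]; exact ord_y21⟩

/-! Cardinality of the alternating group on 10 points. -/

lemma cardG : Nat.card (alternatingGroup (Fin 7 ⊕ Fin 3)) = 1814400 := by
  haveI : Nontrivial (Fin 7 ⊕ Fin 3) := ⟨⟨Sum.inl 0, Sum.inl 1, by simp⟩⟩
  have h := two_mul_card_alternatingGroup (α := Fin 7 ⊕ Fin 3)
  have h2 : Fintype.card (Perm (Fin 7 ⊕ Fin 3)) = 3628800 := by
    rw [Fintype.card_perm]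
    simp [Nat.factorial]
  rw [Nat.card_eq_fintype_card]
  omega

lemma prime_of_dvd_cardG {t : ℕ} (ht : t.Prime) (h : t ∣ 1814400) :
    t = 2 ∨ t = 3 ∨ t = 5 ∨ t = 7 := by
  have h' : t ∣ 2 ^ 7 * 3 ^ 4 * 5 ^ 2 * 7 := by norm_num; exact h
  rcases (Nat.Prime.dvd_mul ht).mp h' with h'' | h''
  · rcases (Nat.Prime.dvd_mul ht).mp h'' with h3 | h3
    · rcases (Nat.Prime.dvd_mul ht).mp h3 with h4 | h4
      · exact Or.inl ((Nat.prime_dvd_prime_iff_eq ht (by norm_num)).mp (ht.dvd_of_dvd_pow h4))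
      · exact Or.inr (Or.inl
          ((Nat.prime_dvd_prime_iff_eq ht (by norm_num)).mp (ht.dvd_of_dvd_pow h4)))
    · exact Or.inr (Or.inr (Or.inl
        ((Nat.prime_dvd_prime_iff_eq ht (by norm_num)).mp (ht.dvd_of_dvd_pow h3))))
  · exact Or.inr (Or.inr (Or.inr ((Nat.prime_dvd_prime_iff_eq ht (by norm_num)).mp h'')))

end PG10

open PG10 in
/-- The case `(n,k) = (10,7)`: with `G = A(Fin 7 ⊕ Fin 3) ≅ A₁₀` and
`H = (S₇ × S₃) ∩ G` (the intersection of `G` with the range of `sumCongrHom`),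
one has `Γ(G) = Γ(H)`. -/
theorem prime_graph_A10_eq_S7xS3_cap :
    (∀ t : ℕ, t.Prime →
      (t ∣ Nat.card (alternatingGroup (Fin 7 ⊕ Fin 3)) ↔
        t ∣ Nat.card (alternatingGroup (Fin 7 ⊕ Fin 3) ⊓
          (Equiv.Perm.sumCongrHom (Fin 7) (Fin 3)).range : Subgroup (Equiv.Perm (Fin 7 ⊕ Fin 3))))) ∧
    (∀ r s : ℕ, r.Prime → s.Prime → r ≠ s →
      ((∃ x : alternatingGroup (Fin 7 ⊕ Fin 3), orderOf x = r * s) ↔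
        (∃ y : (alternatingGroup (Fin 7 ⊕ Fin 3) ⊓
          (Equiv.Perm.sumCongrHom (Fin 7) (Fin 3)).range : Subgroup (Equiv.Perm (Fin 7 ⊕ Fin 3))),
          orderOf y = r * s))) := by
  constructor
  · intro t ht
    constructor
    · intro hdvd
      rw [cardG] at hdvd
      obtain ⟨y10', hy10⟩ := exH10
      obtain ⟨y21', hy21⟩ := exH21
      have h10 : (10 : ℕ) ∣ Nat.card Hsub := hy10 ▸ orderOf_dvd_natCard y10'
      have h21 : (21 : ℕ) ∣ Nat.card Hsub := hy21 ▸ orderOf_dvd_natCard y21'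
      rcases prime_of_dvd_cardG ht hdvd with rfl | rfl | rfl | rfl
      · exact dvd_trans (by norm_num) h10
      · exact dvd_trans (by norm_num) h21
      · exact dvd_trans (by norm_num) h10
      · exact dvd_trans (by norm_num) h21
    · intro hdvd
      exact hdvd.trans (Subgroup.card_dvd_of_le inf_le_left)
  · intro r s hr hs hrs
    constructor
    · intro ⟨x, hx⟩
      have hdvd : r * s ∣ 1814400 := by
        rw [← cardG, ← hx]; exact orderOf_dvd_natCard x
      have hordσ : orderOf (x : Perm (Fin 7 ⊕ Fin 3)) = r * s := by
        rw [Subgroup.orderOf_coe]; exact hx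
      have hsign : Equiv.Perm.sign (x : Perm (Fin 7 ⊕ Fin 3)) = 1 :=
        Equiv.Perm.mem_alternatingGroup.mp x.2
      have hrc := prime_of_dvd_cardG hr (dvd_trans (Dvd.intro s rfl) hdvd)
      have hsc := prime_of_dvd_cardG hs (dvd_trans (Dvd.intro_left r rfl) hdvd)
      rcases hrc with rfl | rfl | rfl | rfl <;> rcases hsc with rfl | rfl | rfl | rfl <;>
        first
          | exact absurd rfl hrs
          | (exact (by norm_num : (2:ℕ) * 3 = 6) ▸ exH6)
          | (exact (by norm_num : (3:ℕ) * 2 = 6) ▸ exH6)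
          | (exact (by norm_num : (2:ℕ) * 5 = 10) ▸ exH10)
          | (exact (by norm_num : (5:ℕ) * 2 = 10) ▸ exH10)
          | (exact (by norm_num : (3:ℕ) * 5 = 15) ▸ exH15)
          | (exact (by norm_num : (5:ℕ) * 3 = 15) ▸ exH15)
          | (exact (by norm_num : (3:ℕ) * 7 = 21) ▸ exH21)
          | (exact (by norm_num : (7:ℕ) * 3 = 21) ▸ exH21)
          | (exact absurd (show orderOf (x : Equiv.Perm (Fin 7 ⊕ Fin 3)) = 14 by
                omega) (fun hc => no_order_14 _ hsign hc))
          | (exact absurd (show orderOf (x : Equiv.Perm (Fin 7 ⊕ Fin 3)) = 35 by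
                omega) (fun hc => no_order_35 _ hc))
    · intro ⟨y, hy⟩
      refine ⟨⟨(y : Perm (Fin 7 ⊕ Fin 3)), (Subgroup.mem_inf.mp y.2).1⟩, ?_⟩
      rw [Subgroup.orderOf_mk, Subgroup.orderOf_coe]
      exact hy
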